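/- (Inductive coefficient bound for the kernel series) With the operators P_{i,j} acting on monomials s^m t^k via P_{i,j}(s^m t^k) = c_{i,j} s^{m+i} t^{k+j} (with the coefficients c_{i,j} as specified, vanishing when j + k ≤ 0 or i + m = 1), and M = max{1,|α̃|,|δ̃|,|r̃|}: for every n ≥ 1 and every composition R = P_{i_n,j_n} ⋯ P_{i_1,j_1} with i_q ∈ {1,2}, j_q ∈ {-2,-1,0,1}, applied to the monomial st, if R(st) = C s^β t^{σ+1} with σ = ∑_q j_q > -1, then |C| ≤ M^n / ((n+1)! (σ+1)!). -/

import Mathlib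

/-- The coefficient produced when `P_{i,j}` acts on the monomial `s^m t^k`
(as `P_{i,j}(s^m t^k) = c_{i,j} s^{m+i} t^{k+j}`), vanishing when `j + k ≤ 0`
or `i + m = 1`. -/
noncomputable def coeffP (α δ r : ℝ) (i : ℕ) (j : ℤ) (m : ℕ) (k : ℤ) : ℂ :=
  if j + k ≤ 0 ∨ i + m = 1 then 0
  else if i = 2 ∧ j = -2 then
    -((k : ℂ) * ((k : ℂ) - 1)) / (3 * ((m : ℂ) + 1) * ((m : ℂ) + 2))
  else if i = 1 ∧ j = -1 then (k : ℂ) / ((m : ℂ) + 1)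
  else if i = 2 ∧ j = -1 then
    Complex.I * (α : ℂ) * (k : ℂ) / (3 * ((m : ℂ) + 1) * ((m : ℂ) + 2))
  else if i = 1 ∧ j = 0 then -2 * Complex.I * (α : ℂ) / (3 * ((m : ℂ) + 1))
  else if i = 2 ∧ j = 0 then -(δ : ℂ) / (3 * ((m : ℂ) + 1) * ((m : ℂ) + 2))
  else if i = 2 ∧ j = 1 then
    (r : ℂ) / (3 * ((m : ℂ) + 1) * ((m : ℂ) + 2) * ((k : ℂ) + 1))
  else 0

/-- Applying a composition of the operators `P_{i,j}` (given as a list of index pairs,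
innermost operator last) to the monomial `s t`, keeping track of
(coefficient, s-degree, t-degree). -/
noncomputable def kernelFold (α δ r : ℝ) : List (ℕ × ℤ) → ℂ × ℕ × ℤ
  | [] => (1, 1, 1)
  | (i, j) :: rest =>
    let s := kernelFold α δ r rest
    (s.1 * coeffP α δ r i j s.2.1 s.2.2, s.2.1 + i, s.2.2 + j)

lemma sdeg (α δ r : ℝ) (ops : List (ℕ × ℤ)) (hi : ∀ q ∈ ops, q.1 = 1 ∨ q.1 = 2) :
    ops.length + 1 ≤ (kernelFold α δ r ops).2.1 := by
  induction ops with
  | nil => simp [kernelFold]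
  | cons a rest ih =>
    obtain ⟨i, j⟩ := a
    have h1 : 1 ≤ i := by rcases hi (i, j) List.mem_cons_self with h | h <;> omega
    have := ih (fun q hq => hi q (List.mem_cons_of_mem _ hq))
    simp only [kernelFold, List.length_cons]
    omega

lemma keyhelp (a T D Mv N : ℝ) (ha : 0 ≤ a) (haM : a ≤ Mv) (hT : 0 ≤ T) (hN : 0 < N + 2)
    (hND : N + 2 ≤ D) : a * T / D ≤ Mv * T / (N + 2) :=
  div_le_div₀ (mul_nonneg (ha.trans haM) hT) (mul_le_mul_of_nonneg_right haM hT) hN hND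

lemma step (Cn cx Mv T : ℝ) (n Fq Fq' : ℕ) (hc : 0 ≤ cx) (hM : 1 ≤ Mv)
    (hFq : 0 < Fq) (hFq' : 0 < Fq') (hT0 : 0 < T)
    (h1 : Cn ≤ Mv ^ n / ((n + 1).factorial * Fq))
    (hT : T * Fq' = Fq)
    (key : cx ≤ Mv * T / ((n : ℝ) + 2)) :
    Cn * cx ≤ Mv ^ (n + 1) / (((n + 1) + 1).factorial * Fq') := by
  have hMpos : (0:ℝ) < Mv := lt_of_lt_of_le one_pos hM
  calc Cn * cx ≤ (Mv ^ n / ((n + 1).factorial * Fq)) * (Mv * T / ((n : ℝ) + 2)) :=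
        mul_le_mul h1 key hc (by positivity)
    _ = Mv ^ (n + 1) / (((n + 1) + 1).factorial * Fq') := by
        rw [← hT, Nat.factorial_succ (n + 1)]
        have h2 : ((n:ℝ) + 2) ≠ 0 := by positivity
        have h3 : ((n + 1).factorial : ℝ) ≠ 0 := by positivity
        have h4 : (Fq' : ℝ) ≠ 0 := by positivity
        have h5 : T ≠ 0 := ne_of_gt hT0
        push_cast
        field_simp
        ring

lemma main (α δ r : ℝ) : ∀ ops : List (ℕ × ℤ), (∀ q ∈ ops, q.1 = 1 ∨ q.1 = 2) →
    ((kernelFold α δ r ops).1 ≠ 0 → 1 ≤ (kernelFold α δ r ops).2.2) ∧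
    ‖(kernelFold α δ r ops).1‖ ≤ (max 1 (max |α| (max |δ| |r|))) ^ ops.length /
      ((ops.length + 1).factorial * ((kernelFold α δ r ops).2.2.toNat).factorial) := by
  intro ops
  induction ops with
  | nil =>
    intro _
    constructor
    · intro _; simp [kernelFold]
    · simp [kernelFold]
  | cons a rest ih =>
    obtain ⟨i, j⟩ := a
    intro hi
    have hir : ∀ q ∈ rest, q.1 = 1 ∨ q.1 = 2 := fun q hq => hi q (List.mem_cons_of_mem _ hq)
    obtain ⟨ih1, ih2⟩ := ih hir
    set M : ℝ := max 1 (max |α| (max |δ| |r|)) with hMdef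
    have hM1 : (1:ℝ) ≤ M := le_max_left _ _
    have hMα : |α| ≤ M := le_trans (le_max_left _ _) (le_max_right _ _)
    have hMδ : |δ| ≤ M := le_trans (le_trans (le_max_left _ _) (le_max_right _ _)) (le_max_right _ _)
    have hMr : |r| ≤ M := le_trans (le_trans (le_max_right _ _) (le_max_right _ _)) (le_max_right _ _)
    simp only [kernelFold, List.length_cons]
    set C := (kernelFold α δ r rest).1 with hCdef
    set β := (kernelFold α δ r rest).2.1 with hβdef
    set κ := (kernelFold α δ r rest).2.2 with hκdef
    set n := rest.length with hndef
    by_cases hc0 : C * coeffP α δ r i j β κ = 0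
    · rw [hc0]
      refine ⟨fun h => absurd rfl h, ?_⟩
      rw [norm_zero]
      positivity
    have hC : C ≠ 0 := fun h => hc0 (by rw [h, zero_mul])
    have hc : coeffP α δ r i j β κ ≠ 0 := fun h => hc0 (by rw [h, mul_zero])
    have hκ1 : 1 ≤ κ := ih1 hC
    have hcond : ¬(j + κ ≤ 0 ∨ i + β = 1) := by
      intro h
      exact hc (by rw [coeffP, if_pos h])
    push_neg at hcond
    obtain ⟨hjκ, hiβ⟩ := hcond
    have hcond' : ¬(j + κ ≤ 0 ∨ i + β = 1) := by push_neg; exact ⟨hjκ, hiβ⟩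
    refine ⟨fun _ => by omega, ?_⟩
    have hβn : n + 1 ≤ β := sdeg α δ r rest hir
    have hBN : (n:ℝ) + 1 ≤ (β:ℝ) := by exact_mod_cast hβn
    have hB0 : (0:ℝ) ≤ (β:ℝ) := Nat.cast_nonneg β
    have hN2 : (0:ℝ) < (n:ℝ) + 2 := by positivity
    have hD1 : (n:ℝ) + 2 ≤ (β:ℝ) + 1 := by linarith
    have hD1p : (0:ℝ) < (β:ℝ) + 1 := by linarith
    have hD2 : (n:ℝ) + 2 ≤ 3 * ((β:ℝ) + 1) * ((β:ℝ) + 2) := by nlinarith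
    have hD2p : (0:ℝ) < 3 * ((β:ℝ) + 1) * ((β:ℝ) + 2) := by nlinarith
    rw [norm_mul]
    have hij := hi (i, j) List.mem_cons_self
    simp only at hij
    rcases hij with hi1 | hi2
    · subst hi1
      by_cases hj1 : j = -1
      · subst hj1
        -- i = 1, j = -1
        obtain ⟨p, hp⟩ : ∃ p : ℕ, κ = (p:ℤ) + 2 := ⟨(κ-2).toNat, by omega⟩
        have hval : coeffP α δ r 1 (-1) β κ =
            (((((p:ℝ)+2) / ((β:ℝ)+1)) : ℝ) : ℂ) := by
          simp only [coeffP, if_neg hcond']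
          norm_num
          rw [hp]
          push_cast
          ring
        have hnorm : ‖coeffP α δ r 1 (-1) β κ‖ = 1 * ((p:ℝ)+2) / ((β:ℝ)+1) := by
          rw [hval, Complex.norm_real, Real.norm_eq_abs, abs_div,
            abs_of_pos (show (0:ℝ) < (β:ℝ)+1 by positivity),
            abs_of_pos (show (0:ℝ) < (p:ℝ)+2 by positivity)]
          ring
        rw [show (κ + -1).toNat = p + 1 from by omega]
        refine step ‖C‖ _ M ((p:ℝ)+2) n (p+2).factorial (p+1).factorial (norm_nonneg _) hM1
          (Nat.factorial_pos _) (Nat.factorial_pos _) (by positivity) ?_ ?_ ?_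
        · rwa [show κ.toNat = p + 2 from by omega] at ih2
        · rw [Nat.factorial_succ (p+1)]; push_cast; ring
        · rw [hnorm]
          exact keyhelp 1 _ _ M (n:ℝ) zero_le_one hM1 (by positivity) hN2 hD1
      by_cases hj0 : j = 0
      · subst hj0
        -- i = 1, j = 0
        obtain ⟨p, hp⟩ : ∃ p : ℕ, κ = (p:ℤ) + 1 := ⟨(κ-1).toNat, by omega⟩
        have hval : coeffP α δ r 1 0 β κ =
            ((((-2*α) / (3*((β:ℝ)+1))) : ℝ) : ℂ) * Complex.I := by
          simp only [coeffP, if_neg hcond']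
          norm_num
          push_cast
          ring
        have hnorm : ‖coeffP α δ r 1 0 β κ‖ = (2*|α|/3) * 1 / ((β:ℝ)+1) := by
          rw [hval, norm_mul, Complex.norm_I, mul_one, Complex.norm_real, Real.norm_eq_abs, abs_div,
            abs_of_pos (show (0:ℝ) < 3*((β:ℝ)+1) by positivity),
            show |(-2*α)| = 2*|α| from by rw [abs_mul]; norm_num]
          field_simp
        rw [show (κ + 0).toNat = p + 1 from by omega]
        refine step ‖C‖ _ M 1 n (p+1).factorial (p+1).factorial (norm_nonneg _) hM1
          (Nat.factorial_pos _) (Nat.factorial_pos _) one_pos ?_ (one_mul _) ?_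
        · rwa [show κ.toNat = p + 1 from by omega] at ih2
        · rw [hnorm]
          exact keyhelp (2*|α|/3) _ _ M (n:ℝ)
            (by positivity) (by nlinarith [abs_nonneg α]) zero_le_one hN2 hD1
      · exfalso
        apply hc
        simp [coeffP, hcond', hj1, hj0]
    · subst hi2
      by_cases hj2 : j = -2
      · subst hj2
        -- i = 2, j = -2
        obtain ⟨p, hp⟩ : ∃ p : ℕ, κ = (p:ℤ) + 3 := ⟨(κ-3).toNat, by omega⟩
        have hval : coeffP α δ r 2 (-2) β κ =
            ((((-((((p:ℝ)+3)*((p:ℝ)+2)))) / (3*((β:ℝ)+1)*((β:ℝ)+2))) : ℝ) : ℂ) := by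
          simp only [coeffP, if_neg hcond']
          norm_num
          rw [hp]
          push_cast
          ring
        have hnorm : ‖coeffP α δ r 2 (-2) β κ‖
            = 1 * (((p:ℝ)+3)*((p:ℝ)+2)) / (3*((β:ℝ)+1)*((β:ℝ)+2)) := by
          rw [hval, Complex.norm_real, Real.norm_eq_abs, abs_div, abs_neg,
            abs_of_pos (show (0:ℝ) < 3*((β:ℝ)+1)*((β:ℝ)+2) by positivity),
            abs_of_pos (show (0:ℝ) < ((p:ℝ)+3)*((p:ℝ)+2) by positivity)]
          ring
        rw [show (κ + -2).toNat = p + 1 from by omega]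
        refine step ‖C‖ _ M (((p:ℝ)+3)*((p:ℝ)+2)) n (p+3).factorial (p+1).factorial
          (norm_nonneg _) hM1 (Nat.factorial_pos _) (Nat.factorial_pos _) (by positivity) ?_ ?_ ?_
        · rwa [show κ.toNat = p + 3 from by omega] at ih2
        · rw [Nat.factorial_succ (p+2), Nat.factorial_succ (p+1)]; push_cast; ring
        · rw [hnorm]
          exact keyhelp 1 _ _ M (n:ℝ) zero_le_one hM1 (by positivity) hN2 hD2
      by_cases hj1 : j = -1
      · subst hj1
        -- i = 2, j = -1
        obtain ⟨p, hp⟩ : ∃ p : ℕ, κ = (p:ℤ) + 2 := ⟨(κ-2).toNat, by omega⟩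
        have hval : coeffP α δ r 2 (-1) β κ =
            ((((α*((p:ℝ)+2)) / (3*((β:ℝ)+1)*((β:ℝ)+2))) : ℝ) : ℂ) * Complex.I := by
          simp only [coeffP, if_neg hcond']
          norm_num
          rw [hp]
          push_cast
          ring
        have hnorm : ‖coeffP α δ r 2 (-1) β κ‖
            = |α| * ((p:ℝ)+2) / (3*((β:ℝ)+1)*((β:ℝ)+2)) := by
          rw [hval, norm_mul, Complex.norm_I, mul_one, Complex.norm_real, Real.norm_eq_abs, abs_div,
            abs_of_pos (show (0:ℝ) < 3*((β:ℝ)+1)*((β:ℝ)+2) by positivity),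
            abs_mul, abs_of_pos (show (0:ℝ) < (p:ℝ)+2 by positivity)]
        rw [show (κ + -1).toNat = p + 1 from by omega]
        refine step ‖C‖ _ M ((p:ℝ)+2) n (p+2).factorial (p+1).factorial (norm_nonneg _) hM1
          (Nat.factorial_pos _) (Nat.factorial_pos _) (by positivity) ?_ ?_ ?_
        · rwa [show κ.toNat = p + 2 from by omega] at ih2
        · rw [Nat.factorial_succ (p+1)]; push_cast; ring
        · rw [hnorm]
          exact keyhelp |α| _ _ M (n:ℝ) (abs_nonneg α) hMα (by positivity) hN2 hD2
      by_cases hj0 : j = 0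
      · subst hj0
        -- i = 2, j = 0
        obtain ⟨p, hp⟩ : ∃ p : ℕ, κ = (p:ℤ) + 1 := ⟨(κ-1).toNat, by omega⟩
        have hval : coeffP α δ r 2 0 β κ =
            ((((-δ) / (3*((β:ℝ)+1)*((β:ℝ)+2))) : ℝ) : ℂ) := by
          simp only [coeffP, if_neg hcond']
          norm_num
          try (push_cast; ring)
        have hnorm : ‖coeffP α δ r 2 0 β κ‖ = |δ| * 1 / (3*((β:ℝ)+1)*((β:ℝ)+2)) := by
          rw [hval, Complex.norm_real, Real.norm_eq_abs, abs_div, abs_neg,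
            abs_of_pos (show (0:ℝ) < 3*((β:ℝ)+1)*((β:ℝ)+2) by positivity)]
          ring
        rw [show (κ + 0).toNat = p + 1 from by omega]
        refine step ‖C‖ _ M 1 n (p+1).factorial (p+1).factorial (norm_nonneg _) hM1
          (Nat.factorial_pos _) (Nat.factorial_pos _) one_pos ?_ (one_mul _) ?_
        · rwa [show κ.toNat = p + 1 from by omega] at ih2
        · rw [hnorm]
          exact keyhelp |δ| _ _ M (n:ℝ) (abs_nonneg δ) hMδ zero_le_one hN2 hD2
      by_cases hjp : j = 1
      · subst hjp
        -- i = 2, j = 1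
        obtain ⟨p, hp⟩ : ∃ p : ℕ, κ = (p:ℤ) + 1 := ⟨(κ-1).toNat, by omega⟩
        have hval : coeffP α δ r 2 1 β κ =
            (((r / (3*((β:ℝ)+1)*((β:ℝ)+2)*((p:ℝ)+2))) : ℝ) : ℂ) := by
          simp only [coeffP, if_neg hcond']
          norm_num
          rw [hp]
          push_cast
          ring
        have hnorm : ‖coeffP α δ r 2 1 β κ‖
            = |r| * (1/((p:ℝ)+2)) / (3*((β:ℝ)+1)*((β:ℝ)+2)) := by
          rw [hval, Complex.norm_real, Real.norm_eq_abs, abs_div,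
            abs_of_pos (show (0:ℝ) < 3*((β:ℝ)+1)*((β:ℝ)+2)*((p:ℝ)+2) by positivity)]
          rw [mul_one_div, div_div]
          ring
        rw [show (κ + 1).toNat = p + 2 from by omega]
        refine step ‖C‖ _ M (1/((p:ℝ)+2)) n (p+1).factorial (p+2).factorial (norm_nonneg _) hM1
          (Nat.factorial_pos _) (Nat.factorial_pos _) (by positivity) ?_ ?_ ?_
        · rwa [show κ.toNat = p + 1 from by omega] at ih2
        · rw [Nat.factorial_succ (p+1)]
          push_cast
          have h2 : ((p:ℝ)+2) ≠ 0 := by positivity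
          field_simp
          ring
        · rw [hnorm]
          exact keyhelp |r| _ _ M (n:ℝ) (abs_nonneg r) hMr (by positivity) hN2 hD2
      · exfalso
        apply hc
        simp [coeffP, hcond', hj2, hj1, hj0, hjp]

lemma tdeg (α δ r : ℝ) (ops : List (ℕ × ℤ)) :
    (kernelFold α δ r ops).2.2 = 1 + (ops.map Prod.snd).sum := by
  induction ops with
  | nil => simp [kernelFold]
  | cons a rest ih => obtain ⟨i, j⟩ := a; simp [kernelFold, ih]; ring

/-- Inductive coefficient bound for the kernel series: if
`R(st) = P_{i_n,j_n} ⋯ P_{i_1,j_1}(st) = C s^β t^{σ+1}` with `σ = ∑ j_q > -1`, then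
`|C| ≤ M^n / ((n+1)! (σ+1)!)` where `M = max{1,|α̃|,|δ̃|,|r̃|}`. -/
theorem stmt_6 (α δ r : ℝ) (ops : List (ℕ × ℤ)) (hlen : 1 ≤ ops.length)
    (hi : ∀ q ∈ ops, q.1 = 1 ∨ q.1 = 2)
    (hj : ∀ q ∈ ops, q.2 = -2 ∨ q.2 = -1 ∨ q.2 = 0 ∨ q.2 = 1)
    (σ : ℤ) (hσ : σ = (ops.map Prod.snd).sum) (hσpos : -1 < σ) :
    let M : ℝ := max 1 (max |α| (max |δ| |r|))
    ‖(kernelFold α δ r ops).1‖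
      ≤ M ^ ops.length / ((ops.length + 1).factorial * ((σ + 1).toNat).factorial) := by
  intro M
  have ht : (kernelFold α δ r ops).2.2 = σ + 1 := by rw [tdeg, hσ]; ring
  have h := (main α δ r ops hi).2
  rwa [ht] at h
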